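/- Let T be a triangulated category and let X and Y be triangulated subcategories of T. If Hom_T(x, y) = 0 for all x ∈ X and y ∈ Y, then the subcategory of extensions X * Y is a triangulated subcategory of T. -/

import Mathlib

namespace Paper

open CategoryTheory Limits Triangulated Pretriangulated ZeroObject

universe w v u

variable {C : Type u} [Category.{v} C] [HasZeroObject C] [Preadditive C] [HasShift C ℤ]
  [∀ n : ℤ, (shiftFunctor C n).Additive] [Pretriangulated C]

/-- The subcategory of extensions `X * Y`: objects `e` admitting a distinguished triangle
`x ⟶ e ⟶ y ⟶ x⟦1⟧` with `x ∈ X` and `y ∈ Y`. -/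
def star (X Y : Set C) : Set C :=
  {e | ∃ (x y : C) (_ : x ∈ X) (_ : y ∈ Y) (f : x ⟶ e) (g : e ⟶ y) (h : y ⟶ x⟦(1 : ℤ)⟧),
    Triangle.mk f g h ∈ distTriang C}

/-- A (strictly full) triangulated subcategory: a class of objects containing `0`, closed
under isomorphisms, suspension, desuspension and extensions. -/
structure IsTriangulatedSubcat (S : Set C) : Prop where
  zero_mem : (0 : C) ∈ S
  mem_of_iso : ∀ {a b : C}, (a ≅ b) → a ∈ S → b ∈ S
  shift_mem : ∀ {a : C}, a ∈ S → a⟦(1 : ℤ)⟧ ∈ S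
  unshift_mem : ∀ {a : C}, a ∈ S → a⟦(-1 : ℤ)⟧ ∈ S
  ext₂ : ∀ {a e b : C} (f : a ⟶ e) (g : e ⟶ b) (h : b ⟶ a⟦(1 : ℤ)⟧),
    (Triangle.mk f g h ∈ distTriang C) → a ∈ S → b ∈ S → e ∈ S

/-- A thick subcategory: a triangulated subcategory closed under direct summands
(equivalently, retracts). -/
structure IsThickSubcat (S : Set C) extends IsTriangulatedSubcat S : Prop where
  mem_of_retract : ∀ {a s : C}, s ∈ S → (∃ (i : a ⟶ s) (p : s ⟶ a), i ≫ p = 𝟙 a) → a ∈ S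

/-- `(U, V)` is a stable t-structure in the (triangulated sub)category whose class of
objects is `S`: both are triangulated subcategories contained in `S`, `Hom(U, V) = 0`
and `U * V = S`. -/
structure IsStableTStructureIn (S U V : Set C) : Prop where
  subsetU : U ⊆ S
  subsetV : V ⊆ S
  triU : IsTriangulatedSubcat U
  triV : IsTriangulatedSubcat V
  hom_zero : ∀ {u v : C}, u ∈ U → v ∈ V → ∀ f : u ⟶ v, f = 0
  star_eq : star U V = S

lemma IsTriangulatedSubcat.shift_all {S : Set C} (hS : IsTriangulatedSubcat S) (a : C) (n : ℤ)
    (ha : a ∈ S) : a⟦n⟧ ∈ S := by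
  induction n using Int.induction_on with
  | zero => exact hS.mem_of_iso ((shiftFunctorZero C ℤ).app a).symm ha
  | succ i hi =>
      exact hS.mem_of_iso ((shiftFunctorAdd' C (i : ℤ) 1 ((i : ℤ) + 1) rfl).app a).symm
        (hS.shift_mem hi)
  | pred i hi =>
      exact hS.mem_of_iso
        ((shiftFunctorAdd' C (-(i : ℤ)) (-1) (-(i : ℤ) - 1) (by ring)).app a).symm
        (hS.unshift_mem hi)

/-- The Mathlib `Triangulated.Subcategory` associated to a class of objects satisfying
`IsTriangulatedSubcat`. -/
def IsTriangulatedSubcat.toSubcategory {S : Set C} (hS : IsTriangulatedSubcat S) :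
    ObjectProperty C :=
  fun a => a ∈ S

lemma IsTriangulatedSubcat.inter {X Y : Set C} (hX : IsTriangulatedSubcat X)
    (hY : IsTriangulatedSubcat Y) : IsTriangulatedSubcat (X ∩ Y) where
  zero_mem := ⟨hX.zero_mem, hY.zero_mem⟩
  mem_of_iso := fun e h => ⟨hX.mem_of_iso e h.1, hY.mem_of_iso e h.2⟩
  shift_mem := fun h => ⟨hX.shift_mem h.1, hY.shift_mem h.2⟩
  unshift_mem := fun h => ⟨hX.unshift_mem h.1, hY.unshift_mem h.2⟩
  ext₂ := fun f g h hT ha hb => ⟨hX.ext₂ f g h hT ha.1 hb.1, hY.ext₂ f g h hT ha.2 hb.2⟩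

/-- The Verdier quotient of `C` by the triangulated subcategory `S`. -/
abbrev VerdierQuotient {S : Set C} (hS : IsTriangulatedSubcat S) : Type _ :=
  hS.toSubcategory.trW.Localization

/-- The Verdier quotient functor. -/
noncomputable abbrev Vq {S : Set C} (hS : IsTriangulatedSubcat S) : C ⥤ VerdierQuotient hS :=
  hS.toSubcategory.trW.Q

/-- The essential image of a class of objects under a functor (the closure under
isomorphisms of the image). -/
def QSet {D : Type*} [Category D] (L : C ⥤ D) (S : Set C) : Set D :=
  {d | ∃ s ∈ S, Nonempty (L.obj s ≅ d)}

/-- The right perpendicular class `X^⊥`. -/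
def rightPerp (X : Set C) : Set C := {t | ∀ {x : C}, x ∈ X → ∀ f : x ⟶ t, f = 0}

/-- The left perpendicular class `^⊥X`. -/
def leftPerp (X : Set C) : Set C := {t | ∀ {x : C}, x ∈ X → ∀ f : t ⟶ x, f = 0}


lemma star_mem' {X Y : Set C} {T : Triangle C} (hT : T ∈ distTriang C)
    (h1 : T.obj₁ ∈ X) (h3 : T.obj₃ ∈ Y) : T.obj₂ ∈ star X Y :=
  ⟨T.obj₁, T.obj₃, h1, h3, T.mor₁, T.mor₂, T.mor₃, hT⟩

lemma star_iso {X Y : Set C} {a b : C} (e : a ≅ b) (ha : a ∈ star X Y) : b ∈ star X Y := by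
  obtain ⟨x, y, hx, hy, f, g, h, hT⟩ := ha
  refine ⟨x, y, hx, hy, f ≫ e.hom, e.inv ≫ g, h,
    isomorphic_distinguished _ hT _ (Triangle.isoMk _ _ (Iso.refl _) e.symm (Iso.refl _)
      ?_ ?_ ?_)⟩
  · exact (by simp : (f ≫ e.hom) ≫ e.inv = 𝟙 x ≫ f)
  · exact (by simp : (e.inv ≫ g) ≫ 𝟙 y = e.inv ≫ g)
  · exact (by simp : h ≫ (shiftFunctor C (1 : ℤ)).map (𝟙 x) = 𝟙 y ≫ h)

lemma star_shift {X Y : Set C} (hX : IsTriangulatedSubcat X) (hY : IsTriangulatedSubcat Y)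
    {a : C} (ha : a ∈ star X Y) (n : ℤ) : a⟦n⟧ ∈ star X Y := by
  obtain ⟨x, y, hx, hy, f, g, h, hT⟩ := ha
  exact star_mem' (Triangle.shift_distinguished _ hT n) (hX.shift_all x n hx)
    (hY.shift_all y n hy)

/-- `Y * X ⊆ X * Y` (split case). -/
lemma star_swap {X Y : Set C} (hY : IsTriangulatedSubcat Y)
    (hzero : ∀ {x y : C}, x ∈ X → y ∈ Y → ∀ f : x ⟶ y, f = 0)
    {y m x : C} (hx : x ∈ X) (hy : y ∈ Y)
    {f : y ⟶ m} {g : m ⟶ x} {h : x ⟶ y⟦(1 : ℤ)⟧}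
    (hT : Triangle.mk f g h ∈ distTriang C) : m ∈ star X Y := by
  have h0 : h = 0 := hzero hx (hY.shift_mem hy) h
  obtain ⟨e, he₁, he₂⟩ := exists_iso_binaryBiproduct_of_distTriang _ hT h0
  exact star_iso ((biprod.braiding x y).trans e.symm)
    (star_mem' (binaryBiproductTriangle_distinguished x y) hx hy)

variable [IsTriangulated C]

/-- `X * (star X Y) ⊆ star X Y`. -/
lemma star_ext_left {X Y : Set C} (hX : IsTriangulatedSubcat X)
    {x m s : C} (hx : x ∈ X) (hs : s ∈ star X Y)
    {f : x ⟶ m} {g : m ⟶ s} {h : s ⟶ x⟦(1 : ℤ)⟧}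
    (hT : Triangle.mk f g h ∈ distTriang C) : m ∈ star X Y := by
  obtain ⟨x₂, y₂, hx₂, hy₂, f₂, g₂, h₂, hT₂⟩ := hs
  obtain ⟨Z, v, w, hZ⟩ := distinguished_cocone_triangle (g ≫ g₂)
  have oct := Triangulated.someOctahedron (u₁₂ := g) (u₂₃ := g₂) rfl
    (rot_of_distTriang _ hT) (rot_of_distTriang _ hT₂) hZ
  have hZX : Z ∈ X := hX.ext₂ _ _ _ oct.mem (hX.shift_mem hx) (hX.shift_mem hx₂)
  exact star_mem' (inv_rot_of_distTriang _ hZ) (hX.unshift_mem hZX) hy₂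

/-- `(star X Y) * Y ⊆ star X Y`. -/
lemma star_ext_right {X Y : Set C} (hY : IsTriangulatedSubcat Y)
    {s m y : C} (hs : s ∈ star X Y) (hy : y ∈ Y)
    {f : s ⟶ m} {g : m ⟶ y} {h : y ⟶ s⟦(1 : ℤ)⟧}
    (hT : Triangle.mk f g h ∈ distTriang C) : m ∈ star X Y := by
  obtain ⟨x₁, y₁, hx₁, hy₁, f₁, g₁, h₁, hT₁⟩ := hs
  obtain ⟨Z, v, w, hZ⟩ := distinguished_cocone_triangle (f₁ ≫ f)
  have oct := Triangulated.someOctahedron (u₁₂ := f₁) (u₂₃ := f) rfl hT₁ hT hZ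
  exact star_mem' hZ hx₁ (hY.ext₂ _ _ _ oct.mem hy₁ hy)

/-- `(star X Y) * X ⊆ star X Y`. -/
lemma star_ext_right_X {X Y : Set C} (hX : IsTriangulatedSubcat X)
    (hY : IsTriangulatedSubcat Y)
    (hzero : ∀ {x y : C}, x ∈ X → y ∈ Y → ∀ f : x ⟶ y, f = 0)
    {s m x : C} (hs : s ∈ star X Y) (hx : x ∈ X)
    {f : s ⟶ m} {g : m ⟶ x} {h : x ⟶ s⟦(1 : ℤ)⟧}
    (hT : Triangle.mk f g h ∈ distTriang C) : m ∈ star X Y := by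
  obtain ⟨x₁, y₁, hx₁, hy₁, f₁, g₁, h₁, hT₁⟩ := hs
  obtain ⟨Z, v, w, hZ⟩ := distinguished_cocone_triangle (f₁ ≫ f)
  have oct := Triangulated.someOctahedron (u₁₂ := f₁) (u₂₃ := f) rfl hT₁ hT hZ
  have hZs : Z ∈ star X Y := star_swap hY hzero hx hy₁ oct.mem
  exact star_ext_left hX hx₁ hZs hZ

/-- If `X`, `Y` are triangulated subcategories of `C` with `Hom(X, Y) = 0`, then `X * Y`
is a triangulated subcategory of `C`. -/
theorem statement9 {X Y : Set C} (hX : IsTriangulatedSubcat X) (hY : IsTriangulatedSubcat Y)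
    (hzero : ∀ {x y : C}, x ∈ X → y ∈ Y → ∀ f : x ⟶ y, f = 0) :
    IsTriangulatedSubcat (star X Y) where
  zero_mem := ⟨0, 0, hX.zero_mem, hY.zero_mem, 𝟙 0, 0, 0, contractible_distinguished 0⟩
  mem_of_iso := fun e ha => star_iso e ha
  shift_mem := fun ha => star_shift hX hY ha 1
  unshift_mem := fun ha => star_shift hX hY ha (-1)
  ext₂ := by
    intro a e b f g h hT ha hb
    obtain ⟨x₂, y₂, hx₂, hy₂, f₂, g₂, h₂, hT₂⟩ := hb
    obtain ⟨Z, v, w, hZ⟩ := distinguished_cocone_triangle (g ≫ g₂)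
    have oct := Triangulated.someOctahedron (u₁₂ := g) (u₂₃ := g₂) rfl
      (rot_of_distTriang _ hT) (rot_of_distTriang _ hT₂) hZ
    have hZs : Z ∈ star X Y := star_ext_right_X hX hY hzero
      (star_shift hX hY ha 1) (hX.shift_mem hx₂) oct.mem
    exact star_ext_right hY (star_shift hX hY hZs (-1)) hy₂
      (inv_rot_of_distTriang _ hZ)

end Paper
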